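/- Fix n ≥ 1, a finite output type 𝒪, and a Markov kernel κ assigning to each s ∈ (Fin n → Bool) a probability mass function κ(s) on 𝒪. Let S be uniform on (Fin n → Bool) and, given S = s, let O be distributed as κ(s). For each i and o, let p⁺_i(o) := 2^{−(n−1)} ∑_{s : s(i) = true} κ(s)(o) and p⁻_i(o) := 2^{−(n−1)} ∑_{s : s(i) = false} κ(s)(o). Then the supremum over all guessers G : 𝒪 → (Fin n → Bool) of the efficacy (1/n) ∑_{i} Pr[G(O)(i) = S(i)] equals 1/2 + (1/(2n)) ∑_{i} D_TV(p⁺_i, p⁻_i), where D_TV(p⁺_i, p⁻_i) := (1/2) ∑_{o ∈ 𝒪} |p⁺_i(o) − p⁻_i(o)| is the total variation distance between the two conditional output distributions. -/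

import Mathlib

open Finset

/-- The conditional output distribution `p^b_i(o) = 2^{-(n-1)} ∑_{s : s i = b} κ s o`. -/
noncomputable def pCond {O : Type*} [Fintype O] (n : ℕ) (κ : (Fin n → Bool) → O → ℝ)
    (i : Fin n) (b : Bool) (o : O) : ℝ :=
  (1 / 2 ^ (n - 1)) * ∑ s : Fin n → Bool, if s i = b then κ s o else 0

/-- `Pr[G(O)(i) = S(i)]` where `S` is uniform on `Fin n → Bool` and `O ~ κ S`. -/
noncomputable def prCorrect {O : Type*} [Fintype O] (n : ℕ) (κ : (Fin n → Bool) → O → ℝ)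
    (G : O → Fin n → Bool) (i : Fin n) : ℝ :=
  (1 / 2 ^ n) * ∑ s : Fin n → Bool, ∑ o : O, κ s o * (if G o i = s i then 1 else 0)

/-- The efficacy of a guesser without abstentions. -/
noncomputable def efficacy {O : Type*} [Fintype O] (n : ℕ) (κ : (Fin n → Bool) → O → ℝ)
    (G : O → Fin n → Bool) : ℝ :=
  (1 / n) * ∑ i : Fin n, prCorrect n κ G i

lemma card_filter_eq (n : ℕ) (hn : 1 ≤ n) (i : Fin n) (b : Bool) :
    ((univ : Finset (Fin n → Bool)).filter (fun s => s i = b)).card = 2 ^ (n - 1) := by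
  have key : ∀ c : Bool, ((univ : Finset (Fin n → Bool)).filter (fun s => s i = c)).card =
      ((univ : Finset (Fin n → Bool)).filter (fun s => s i = !c)).card := by
    intro c
    refine Finset.card_bij' (fun s _ => Function.update s i (!c))
      (fun s _ => Function.update s i c) ?_ ?_ ?_ ?_
    · intro s hs
      simp
    · intro s hs
      simp
    · intro s hs
      simp only [Finset.mem_filter, Finset.mem_univ, true_and] at hs
      funext j
      by_cases hj : j = i
      · subst hj; simp [hs]
      · simp [Function.update_of_ne hj]
    · intro s hs
      simp only [Finset.mem_filter, Finset.mem_univ, true_and] at hs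
      funext j
      by_cases hj : j = i
      · subst hj; simp [hs]
      · simp [Function.update_of_ne hj]
  have hsum : ((univ : Finset (Fin n → Bool)).filter (fun s => s i = true)).card +
      ((univ : Finset (Fin n → Bool)).filter (fun s => s i = false)).card = 2 ^ n := by
    have := Finset.card_filter_add_card_filter_not
      (s := (univ : Finset (Fin n → Bool))) (p := fun s => s i = true)
    simp only [Bool.not_eq_true] at this
    rw [this]
    simp [Finset.card_univ]
  have h2 : 2 * ((univ : Finset (Fin n → Bool)).filter (fun s => s i = b)).card = 2 ^ n := by
    cases b
    · rw [← hsum, key false]; simp; ring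
    · rw [← hsum, key true]; simp; ring
  have h3 : 2 ^ n = 2 * 2 ^ (n - 1) := by
    calc 2 ^ n = 2 ^ (n - 1 + 1) := by rw [Nat.sub_add_cancel hn]
    _ = 2 * 2 ^ (n - 1) := pow_succ' 2 (n - 1)
  rw [h3] at h2
  exact Nat.eq_of_mul_eq_mul_left (by norm_num) h2

lemma pCond_sum {O : Type*} [Fintype O] (n : ℕ) (hn : 1 ≤ n) (κ : (Fin n → Bool) → O → ℝ)
    (hκ1 : ∀ s, ∑ o : O, κ s o = 1) (i : Fin n) (b : Bool) :
    ∑ o : O, pCond n κ i b o = 1 := by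
  unfold pCond
  rw [← Finset.mul_sum, Finset.sum_comm]
  have h : ∀ s : Fin n → Bool, ∑ o : O, (if s i = b then κ s o else 0) =
      if s i = b then (1:ℝ) else 0 := by
    intro s
    by_cases hh : s i = b <;> simp [hh, hκ1 s]
  simp only [h]
  rw [Finset.sum_boole]
  rw [card_filter_eq n hn i b]
  rw [one_div]
  push_cast
  rw [inv_mul_cancel₀]
  positivity

lemma prCorrect_eq {O : Type*} [Fintype O] (n : ℕ) (hn : 1 ≤ n)
    (κ : (Fin n → Bool) → O → ℝ) (G : O → Fin n → Bool) (i : Fin n) :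
    prCorrect n κ G i = (1 / 2) * ∑ o : O, pCond n κ i (G o i) o := by
  unfold prCorrect pCond
  rw [Finset.sum_comm, Finset.mul_sum, Finset.mul_sum]
  apply Finset.sum_congr rfl
  intro o _
  have h1 : ∑ s : Fin n → Bool, κ s o * (if G o i = s i then 1 else 0)
      = ∑ s : Fin n → Bool, if s i = G o i then κ s o else 0 := by
    apply Finset.sum_congr rfl
    intro s _
    by_cases h : s i = G o i
    · simp [h]
    · rw [if_neg (fun hh => h hh.symm), if_neg h]
      simp
  have h2 : (1:ℝ)/2^n = (1/2) * (1/2^(n-1)) := by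
    have h3 : (2:ℝ)^n = 2*2^(n-1) := by
      calc (2:ℝ) ^ n = 2 ^ (n - 1 + 1) := by rw [Nat.sub_add_cancel hn]
      _ = 2 * 2 ^ (n - 1) := pow_succ' 2 (n - 1)
    rw [h3]
    ring
  rw [h1, h2]
  ring

lemma max_eq_half (a b : ℝ) : max a b = (a + b + |a - b|) / 2 := by
  rcases le_total a b with h | h
  · rw [max_eq_right h, abs_of_nonpos (by linarith)]; ring
  · rw [max_eq_left h, abs_of_nonneg (by linarith)]; ring

theorem stmt8 (n : ℕ) (hn : 1 ≤ n) (O : Type*) [Fintype O]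
    (κ : (Fin n → Bool) → O → ℝ) (hκ0 : ∀ s o, 0 ≤ κ s o) (hκ1 : ∀ s, ∑ o : O, κ s o = 1) :
    sSup {x : ℝ | ∃ G : O → Fin n → Bool, x = efficacy n κ G} =
      1 / 2 + (1 / (2 * n)) * ∑ i : Fin n,
        (1 / 2) * ∑ o : O, |pCond n κ i true o - pCond n κ i false o| := by

  have hn' : (n:ℝ) ≠ 0 := by
    have : (1:ℝ) ≤ n := by exact_mod_cast hn
    linarith
  set T : Fin n → ℝ := fun i => ∑ o : O, |pCond n κ i true o - pCond n κ i false o| with hT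
  have hmax : ∀ i : Fin n, ∑ o : O, max (pCond n κ i true o) (pCond n κ i false o)
      = 1 + (1/2) * T i := by
    intro i
    have h : ∀ o : O, max (pCond n κ i true o) (pCond n κ i false o)
        = (pCond n κ i true o + pCond n κ i false o
           + |pCond n κ i true o - pCond n κ i false o|) / 2 := fun o => max_eq_half _ _
    rw [Finset.sum_congr rfl fun o _ => h o]
    rw [← Finset.sum_div, Finset.sum_add_distrib, Finset.sum_add_distrib,
      pCond_sum n hn κ hκ1 i true, pCond_sum n hn κ hκ1 i false]
    simp only [hT]
    ring
  have halg : (1/(n:ℝ)) * ∑ i : Fin n, (1/2 + (1/4) * T i)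
      = 1/2 + (1/(2*(n:ℝ))) * ∑ i : Fin n, (1/2) * T i := by
    rw [Finset.sum_add_distrib, Finset.sum_const, Finset.card_univ, Fintype.card_fin,
      ← Finset.mul_sum, ← Finset.mul_sum]
    field_simp
    ring
  have hRHS : (1 / 2 + (1 / (2 * (n:ℝ))) * ∑ i : Fin n,
      (1 / 2) * ∑ o : O, |pCond n κ i true o - pCond n κ i false o|)
      = 1/2 + (1/(2*(n:ℝ))) * ∑ i : Fin n, (1/2) * T i := rfl
  have hbound : ∀ G : O → Fin n → Bool,
      efficacy n κ G ≤ 1/2 + (1/(2*(n:ℝ))) * ∑ i : Fin n, (1/2) * T i := by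
    intro G
    unfold efficacy
    have hi : ∀ i : Fin n, prCorrect n κ G i ≤ 1/2 + (1/4) * T i := by
      intro i
      rw [prCorrect_eq n hn κ G i]
      have hle : ∑ o : O, pCond n κ i (G o i) o
          ≤ ∑ o : O, max (pCond n κ i true o) (pCond n κ i false o) := by
        apply Finset.sum_le_sum
        intro o _
        cases h : G o i
        · exact le_max_right _ _
        · exact le_max_left _ _
      rw [hmax i] at hle
      linarith
    calc (1/(n:ℝ)) * ∑ i : Fin n, prCorrect n κ G i
        ≤ (1/(n:ℝ)) * ∑ i : Fin n, (1/2 + (1/4) * T i) := by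
          apply mul_le_mul_of_nonneg_left (Finset.sum_le_sum fun i _ => hi i)
          positivity
      _ = _ := halg
  have hopt : efficacy n κ (fun o i => decide (pCond n κ i false o ≤ pCond n κ i true o))
      = 1/2 + (1/(2*(n:ℝ))) * ∑ i : Fin n, (1/2) * T i := by
    unfold efficacy
    have hi : ∀ i : Fin n,
        prCorrect n κ (fun o i => decide (pCond n κ i false o ≤ pCond n κ i true o)) i
        = 1/2 + (1/4) * T i := by
      intro i
      rw [prCorrect_eq n hn]
      have he : ∀ o : O,
          pCond n κ i (decide (pCond n κ i false o ≤ pCond n κ i true o)) o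
          = max (pCond n κ i true o) (pCond n κ i false o) := by
        intro o
        by_cases h : pCond n κ i false o ≤ pCond n κ i true o
        · simp only [h, decide_true]
          rw [max_eq_left h]
        · simp only [h, decide_false]
          rw [max_eq_right (le_of_not_ge h)]
      rw [Finset.sum_congr rfl fun o _ => he o, hmax i]
      ring
    rw [Finset.sum_congr rfl fun i _ => hi i, halg]
  rw [hRHS]
  apply le_antisymm
  · apply csSup_le
    · exact ⟨_, ⟨fun _ _ => true, rfl⟩⟩
    · rintro x ⟨G, rfl⟩
      exact hbound G
  · apply le_csSup
    · exact ⟨_, by rintro x ⟨G, rfl⟩; exact hbound G⟩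
    · exact ⟨_, hopt.symm⟩
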